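/- Let D be a downwards closed dependency, χ(S) a first-order formula where S is a relation symbol that occurs only positively in χ, and let χ'(W₁,…,Wₙ) be obtained from χ by replacing each occurrence of S with a distinct new relation symbol Wᵢ of the same arity. Then for all suitable structures M and assignments s, the following are equivalent: (1) there exists a relation S such that ⟨M,S⟩ ∈ D and M ⊨_s χ(S); (2) there exist relations W₁,…,Wₙ such that ⟨M, ⋃ᵢ Wᵢ⟩ ∈ D and M ⊨_s χ'(W₁,…,Wₙ). -/
import Mathlib


/-! # A framework for lax team semantics (Galliani-style)

Signatures, structures, terms, NNF formulas of `FO(𝒟)` with dependency atoms,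
lax team semantics, Tarskian semantics for first-order formulas, and the
notions of dependency used in the paper. -/

/-- A first-order signature: function and relation symbols of each arity. -/
structure Sig : Type 1 where
  Func : ℕ → Type
  Rel : ℕ → Type

/-- A structure for the signature `σ` with domain `M`. -/
structure Struc (σ : Sig) (M : Type) : Type where
  fn : ∀ n, σ.Func n → (Fin n → M) → M
  rel : ∀ n, σ.Rel n → (Fin n → M) → Prop

/-- Terms over `σ`, with variables indexed by `ℕ`. -/
inductive Tm (σ : Sig) : Type where
  | var : ℕ → Tm σ
  | app : ∀ n, σ.Func n → (Fin n → Tm σ) → Tm σ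

def Tm.eval {σ : Sig} {M : Type} (𝔐 : Struc σ M) (s : ℕ → M) : Tm σ → M
  | .var v => s v
  | .app n f ts => 𝔐.fn n f fun i => (ts i).eval 𝔐 s

def Tm.vars {σ : Sig} : Tm σ → Set ℕ
  | .var v => {v}
  | .app _ _ ts => ⋃ i, (ts i).vars

/-- A `k`-ary dependency notion: a class of `k`-ary relations over every domain. -/
def DepOn (k : ℕ) : Type 1 :=
  ∀ M : Type, Set (Fin k → M) → Prop

/-- Closure under isomorphisms (part of the definition of a dependency). -/
def DepOn.IsoClosed {k : ℕ} (D : DepOn k) : Prop :=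
  ∀ (M N : Type) (e : M ≃ N) (R : Set (Fin k → M)),
    D M R → D N ((fun xs => (⇑e) ∘ xs) '' R)

/-- Downwards closure. -/
def DepOn.DownClosed {k : ℕ} (D : DepOn k) : Prop :=
  ∀ (M : Type) (R Q : Set (Fin k → M)), D M R → Q ⊆ R → D M Q

/-- Union closure. -/
def DepOn.UnionClosed {k : ℕ} (D : DepOn k) : Prop :=
  ∀ (M : Type) (I : Type) (Rf : I → Set (Fin k → M)),
    (∀ j, D M (Rf j)) → D M (⋃ j, Rf j)

/-- The empty team property. -/
def DepOn.EmptyTeamProp {k : ℕ} (D : DepOn k) : Prop :=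
  ∀ M : Type, D M (∅ : Set (Fin k → M))

/-- Closed-world dependencies: only the elements occurring in tuples of `R` matter. -/
def DepOn.ClosedWorld {k : ℕ} (D : DepOn k) : Prop :=
  ∀ (M : Type) (R : Set (Fin k → M)),
    D M R ↔ D {m : M // ∃ xs ∈ R, ∃ i, xs i = m} {xs | (fun i => (xs i : M)) ∈ R}

/-- Negation normal form formulas of `FO(𝒟)`: first-order literals, dependency
atoms indexed by `ι` (with arities `ar`), conjunction, disjunction, quantifiers. -/
inductive Fml (σ : Sig) (ι : Type) (ar : ι → ℕ) : Type where
  | eq : Tm σ → Tm σ → Fml σ ι ar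
  | neq : Tm σ → Tm σ → Fml σ ι ar
  | rel : ∀ n, σ.Rel n → (Fin n → Tm σ) → Fml σ ι ar
  | nrel : ∀ n, σ.Rel n → (Fin n → Tm σ) → Fml σ ι ar
  | dep : ∀ i : ι, (Fin (ar i) → Tm σ) → Fml σ ι ar
  | and : Fml σ ι ar → Fml σ ι ar → Fml σ ι ar
  | or : Fml σ ι ar → Fml σ ι ar → Fml σ ι ar
  | ex : ℕ → Fml σ ι ar → Fml σ ι ar
  | all : ℕ → Fml σ ι ar → Fml σ ι ar

namespace Fml
variable {σ : Sig} {ι : Type} {ar : ι → ℕ}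

/-- Free variables of a formula. -/
def free : Fml σ ι ar → Set ℕ
  | .eq t u => t.vars ∪ u.vars
  | .neq t u => t.vars ∪ u.vars
  | .rel _ _ ts => ⋃ i, (ts i).vars
  | .nrel _ _ ts => ⋃ i, (ts i).vars
  | .dep _ ts => ⋃ i, (ts i).vars
  | .and φ ψ => φ.free ∪ ψ.free
  | .or φ ψ => φ.free ∪ ψ.free
  | .ex v φ => φ.free \ {v}
  | .all v φ => φ.free \ {v}

/-- The relation symbols occurring in negated literals of a formula. -/
def negRels : Fml σ ι ar → Set (Σ n, σ.Rel n)
  | .eq _ _ => ∅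
  | .neq _ _ => ∅
  | .rel _ _ _ => ∅
  | .nrel n R _ => {⟨n, R⟩}
  | .dep _ _ => ∅
  | .and φ ψ => φ.negRels ∪ ψ.negRels
  | .or φ ψ => φ.negRels ∪ ψ.negRels
  | .ex _ φ => φ.negRels
  | .all _ φ => φ.negRels

open Classical in
/-- The number of occurrences (positive or negative) of a relation symbol. -/
noncomputable def countRel (S : Σ n, σ.Rel n) : Fml σ ι ar → ℕ
  | .eq _ _ => 0
  | .neq _ _ => 0
  | .rel n R _ => if (⟨n, R⟩ : Σ n, σ.Rel n) = S then 1 else 0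
  | .nrel n R _ => if (⟨n, R⟩ : Σ n, σ.Rel n) = S then 1 else 0
  | .dep _ _ => 0
  | .and φ ψ => countRel S φ + countRel S ψ
  | .or φ ψ => countRel S φ + countRel S ψ
  | .ex _ φ => countRel S φ
  | .all _ φ => countRel S φ

/-- Quantifier-free formulas. -/
def QFree : Fml σ ι ar → Prop
  | .and φ ψ => QFree φ ∧ QFree ψ
  | .or φ ψ => QFree φ ∧ QFree ψ
  | .ex _ _ => False
  | .all _ _ => False
  | _ => True

end Fml

/-- A team: a set of assignments. -/
abbrev Team (M : Type) := Set (ℕ → M)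

/-- Lax supplementation `X[H/v]`. -/
def teamSupp {M : Type} (X : Team M) (H : (ℕ → M) → Set M) (v : ℕ) : Team M :=
  {s' | ∃ s ∈ X, ∃ m ∈ H s, s' = Function.update s v m}

/-- Duplication `X[M/v]`. -/
def teamDup {M : Type} (X : Team M) (v : ℕ) : Team M :=
  teamSupp X (fun _ => Set.univ) v

/-- Simultaneous update of an assignment on a tuple of variables. -/
def updVec {M : Type} (s : ℕ → M) {l : ℕ} (vs : Fin l → ℕ) (m : Fin l → M) : ℕ → M :=
  (List.finRange l).foldr (fun j t => Function.update t (vs j) (m j)) s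

/-- Lax supplementation along a tuple of variables. -/
def teamSuppVec {M : Type} (X : Team M) {l : ℕ} (H : (ℕ → M) → Set (Fin l → M))
    (vs : Fin l → ℕ) : Team M :=
  {s' | ∃ s ∈ X, ∃ m ∈ H s, s' = updVec s vs m}

/-- Restriction `X↾V` of a team to a set of variables. -/
def teamRestrict {M : Type} (X : Team M) (V : Set ℕ) : Set (V → M) :=
  (fun s (v : V) => s v.1) '' X

/-- `X(t)`: the relation of the values of the tuple of terms `t` in the team `X`. -/
def teamVals {σ : Sig} {M : Type} (𝔐 : Struc σ M) (X : Team M) {k : ℕ}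
    (t : Fin k → Tm σ) : Set (Fin k → M) :=
  {xs | ∃ s ∈ X, xs = fun i => (t i).eval 𝔐 s}

/-- `X↾(v = w)(v)`: the relation encoded in `X` by the pair of variable tuples `v`, `w`. -/
def pairRel {M : Type} (Y : Team M) {k : ℕ} (v w : Fin k → ℕ) : Set (Fin k → M) :=
  {xs | ∃ s ∈ Y, (∀ j, xs j = s (v j)) ∧ ∀ j, s (v j) = s (w j)}

/-- Lax team semantics for `FO(𝒟)`. -/
def Fml.TSat {σ : Sig} {ι : Type} {ar : ι → ℕ} (𝒟 : ∀ i, DepOn (ar i)) {M : Type}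
    (𝔐 : Struc σ M) : Fml σ ι ar → Team M → Prop
  | .eq t u, X => ∀ s ∈ X, t.eval 𝔐 s = u.eval 𝔐 s
  | .neq t u, X => ∀ s ∈ X, t.eval 𝔐 s ≠ u.eval 𝔐 s
  | .rel n R ts, X => ∀ s ∈ X, 𝔐.rel n R fun i => (ts i).eval 𝔐 s
  | .nrel n R ts, X => ∀ s ∈ X, ¬ 𝔐.rel n R fun i => (ts i).eval 𝔐 s
  | .dep i ts, X => 𝒟 i M (teamVals 𝔐 X ts)
  | .and φ ψ, X => Fml.TSat 𝒟 𝔐 φ X ∧ Fml.TSat 𝒟 𝔐 ψ X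
  | .or φ ψ, X => ∃ Y Z : Team M, X = Y ∪ Z ∧ Fml.TSat 𝒟 𝔐 φ Y ∧ Fml.TSat 𝒟 𝔐 ψ Z
  | .ex v φ, X => ∃ H : (ℕ → M) → Set M, (∀ s ∈ X, (H s).Nonempty) ∧
      Fml.TSat 𝒟 𝔐 φ (teamSupp X H v)
  | .all v φ, X => Fml.TSat 𝒟 𝔐 φ (teamDup X v)

/-- The arity function of the empty dependency family. -/
abbrev noDep : Empty → ℕ := fun i => i.elim

/-- Pure first-order formulas: no dependency atoms. -/
abbrev FOFml (σ : Sig) := Fml σ Empty noDep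

/-- The empty dependency family. -/
def noDepFam : ∀ i : Empty, DepOn (noDep i) := fun i => i.elim

/-- Tarskian satisfaction for first-order formulas. -/
def FOSat {σ : Sig} {M : Type} (𝔐 : Struc σ M) : (ℕ → M) → FOFml σ → Prop
  | s, .eq t u => t.eval 𝔐 s = u.eval 𝔐 s
  | s, .neq t u => t.eval 𝔐 s ≠ u.eval 𝔐 s
  | s, .rel n R ts => 𝔐.rel n R fun i => (ts i).eval 𝔐 s
  | s, .nrel n R ts => ¬ 𝔐.rel n R fun i => (ts i).eval 𝔐 s
  | _, .dep i _ => i.elim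
  | s, .and φ ψ => FOSat 𝔐 s φ ∧ FOSat 𝔐 s ψ
  | s, .or φ ψ => FOSat 𝔐 s φ ∨ FOSat 𝔐 s ψ
  | s, .ex v φ => ∃ m : M, FOSat 𝔐 (Function.update s v m) φ
  | s, .all v φ => ∀ m : M, FOSat 𝔐 (Function.update s v m) φ

/-- Truth of a sentence of `FO(𝒟)` in a model, via the singleton team. -/
def STrue {σ : Sig} {ι : Type} {ar : ι → ℕ} (𝒟 : ∀ i, DepOn (ar i)) {M : Type}
    (𝔐 : Struc σ M) (φ : Fml σ ι ar) : Prop :=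
  ∀ s : ℕ → M, Fml.TSat 𝒟 𝔐 φ {s}

/-- Tarskian truth of a first-order sentence. -/
def FOTrue {σ : Sig} {M : Type} (𝔐 : Struc σ M) (φ : FOFml σ) : Prop :=
  ∀ s : ℕ → M, FOSat 𝔐 s φ

open Classical in
/-- The structure `𝔐[Q/R]`: change the interpretation of `R` to `Q`. -/
noncomputable def Struc.updRel {σ : Sig} {M : Type} (𝔐 : Struc σ M) {k : ℕ} (R : σ.Rel k)
    (Q : Set (Fin k → M)) : Struc σ M where
  fn := 𝔐.fn
  rel := fun n S xs =>
    if h : (⟨n, S⟩ : Σ n, σ.Rel n) = ⟨k, R⟩ then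
      (fun i => xs (Fin.cast (congrArg Sigma.fst h).symm i)) ∈ Q
    else 𝔐.rel n S xs

/-- Extend a signature by `n` new relation symbols of arities `a`. -/
def Sig.addRels (σ : Sig) (n : ℕ) (a : Fin n → ℕ) : Sig where
  Func := σ.Func
  Rel := fun m => σ.Rel m ⊕ {i : Fin n // a i = m}

/-- Lift a term to an extended signature. -/
def Tm.liftR {σ : Sig} {n : ℕ} {a : Fin n → ℕ} : Tm σ → Tm (σ.addRels n a)
  | .var v => .var v
  | .app m f ts => .app m f fun i => (ts i).liftR

/-- Interpret the new relation symbols by the relations `Q`. -/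
def Struc.withRels {σ : Sig} {M : Type} (𝔐 : Struc σ M) {n : ℕ} {a : Fin n → ℕ}
    (Q : ∀ i, Set (Fin (a i) → M)) : Struc (σ.addRels n a) M where
  fn := 𝔐.fn
  rel := fun m S xs =>
    match S with
    | Sum.inl T => 𝔐.rel m T xs
    | Sum.inr i => (fun j => xs (Fin.cast i.2 j)) ∈ Q i.1

/-- The signature `{R}` with a single `k`-ary relation symbol. -/
def relSig (k : ℕ) : Sig where
  Func := fun _ => Empty
  Rel := fun n => PLift (n = k)

/-- The structure `⟨M, R⟩` over the signature `{R}`. -/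
def relStruc (k : ℕ) {M : Type} (R : Set (Fin k → M)) : Struc (relSig k) M where
  fn := fun _ f => f.elim
  rel := fun _ S xs => (fun i => xs (Fin.cast S.down.symm i)) ∈ R

/-- The empty signature. -/
def emptySig : Sig where
  Func := fun _ => Empty
  Rel := fun _ => Empty

/-- The unique structure over the empty signature with domain `M`. -/
def emptyStruc (M : Type) : Struc emptySig M where
  fn := fun _ f => f.elim
  rel := fun _ r => r.elim

/-- A dependency is first order if it is defined by a first-order sentence `φ(R)`. -/
def FirstOrderDep {k : ℕ} (D : DepOn k) : Prop :=
  ∃ φ : FOFml (relSig k), φ.free = ∅ ∧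
    ∀ (M : Type), Nonempty M → ∀ R : Set (Fin k → M), (D M R ↔ FOTrue (relStruc k R) φ)

/-- A family of dependencies is strongly first order if every sentence of `FO(𝒟)`
(over any signature) is equivalent to some first-order sentence. -/
def StronglyFO {ι : Type} {ar : ι → ℕ} (𝒟 : ∀ i, DepOn (ar i)) : Prop :=
  ∀ (σ : Sig) (φ : Fml σ ι ar), φ.free = ∅ →
    ∃ ψ : FOFml σ, ψ.free = ∅ ∧
      ∀ (M : Type) (𝔐 : Struc σ M), STrue 𝒟 𝔐 φ ↔ FOTrue 𝔐 ψ

/-- A single dependency is strongly first order. -/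
def DepOn.StronglyFO1 {k : ℕ} (D : DepOn k) : Prop :=
  StronglyFO (ι := Unit) (ar := fun _ => k) fun _ => D

/-- `D_max`: the relations satisfying `D` that are maximal among those satisfying `D`. -/
def Dmax {k : ℕ} (D : DepOn k) : DepOn k :=
  fun M R => D M R ∧ ¬ ∃ S : Set (Fin k → M), R ⊂ S ∧ D M S

/-- The constancy dependency. -/
def constDep : DepOn 1 := fun _ R => R.Subsingleton

/-- A dependency `D` is relativizable if each relativized atom `D^P` is definable
in `FO(D)`. -/
def DepOn.Relativizable {k : ℕ} (D : DepOn k) : Prop :=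
  ∀ (σ : Sig) (P : σ.Rel 1) (t : Fin k → Tm σ),
    ∃ φ : Fml σ Unit (fun _ => k),
      ∀ (M : Type) (𝔐 : Struc σ M) (X : Team M),
        Fml.TSat (fun _ => D) 𝔐 φ X ↔
          ((∀ s ∈ X, ∀ i, 𝔐.rel 1 P fun _ => (t i).eval 𝔐 s) ∧
            D {m : M // 𝔐.rel 1 P fun _ => m}
              {xs | ∃ s ∈ X, (fun i => (xs i : M)) = fun i => (t i).eval 𝔐 s})

/-- The union of two dependency families. -/
def sumFam {ιS ιD : Type} {arS : ιS → ℕ} {arD : ιD → ℕ}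
    (𝒮 : ∀ i, DepOn (arS i)) (𝒟 : ∀ i, DepOn (arD i)) :
    ∀ i : ιS ⊕ ιD, DepOn (Sum.elim arS arD i)
  | .inl i => 𝒮 i
  | .inr i => 𝒟 i

/-- The always-true formula. -/
def Fml.verum {σ : Sig} {ι : Type} {ar : ι → ℕ} : Fml σ ι ar := .eq (.var 0) (.var 0)

/-- The formula satisfied only by the empty team. -/
def Fml.falsum {σ : Sig} {ι : Type} {ar : ι → ℕ} : Fml σ ι ar := .neq (.var 0) (.var 0)

/-- Finite conjunction. -/
def bigAndL {σ : Sig} {ι : Type} {ar : ι → ℕ} (l : List (Fml σ ι ar)) : Fml σ ι ar :=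
  l.foldr Fml.and Fml.verum

/-- Finite disjunction. -/
def bigOrL {σ : Sig} {ι : Type} {ar : ι → ℕ} (l : List (Fml σ ι ar)) : Fml σ ι ar :=
  l.foldr Fml.or Fml.falsum

/-- Equality of two variables. -/
def veq {σ : Sig} {ι : Type} {ar : ι → ℕ} (a b : ℕ) : Fml σ ι ar := .eq (.var a) (.var b)

/-- Inequality of two variables. -/
def vne {σ : Sig} {ι : Type} {ar : ι → ℕ} (a b : ℕ) : Fml σ ι ar := .neq (.var a) (.var b)

/-- Universal quantification over a list of variables. -/
def alls {σ : Sig} {ι : Type} {ar : ι → ℕ} (vs : List ℕ) (φ : Fml σ ι ar) : Fml σ ι ar :=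
  vs.foldr Fml.all φ

/-- Existential quantification over a list of variables. -/
def exs {σ : Sig} {ι : Type} {ar : ι → ℕ} (vs : List ℕ) (φ : Fml σ ι ar) : Fml σ ι ar :=
  vs.foldr Fml.ex φ
/-- Replacement of a single occurrence of the dependency atom `dep i₀ t` by the
first-order atom `rel S t`. -/
inductive ReplOne {σ : Sig} {ι : Type} {ar : ι → ℕ} (i₀ : ι) (S : σ.Rel (ar i₀)) :
    Fml σ ι ar → Fml σ ι ar → Prop
  | atom (t : Fin (ar i₀) → Tm σ) : ReplOne i₀ S (.dep i₀ t) (.rel (ar i₀) S t)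
  | andL {φ φ' ψ} : ReplOne i₀ S φ φ' → ReplOne i₀ S (.and φ ψ) (.and φ' ψ)
  | andR {φ ψ ψ'} : ReplOne i₀ S ψ ψ' → ReplOne i₀ S (.and φ ψ) (.and φ ψ')
  | orL {φ φ' ψ} : ReplOne i₀ S φ φ' → ReplOne i₀ S (.or φ ψ) (.or φ' ψ)
  | orR {φ ψ ψ'} : ReplOne i₀ S ψ ψ' → ReplOne i₀ S (.or φ ψ) (.or φ ψ')
  | exC {v φ φ'} : ReplOne i₀ S φ φ' → ReplOne i₀ S (.ex v φ) (.ex v φ')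
  | allC {v φ φ'} : ReplOne i₀ S φ φ' → ReplOne i₀ S (.all v φ) (.all v φ')

/-- Replacement of every occurrence of the relation symbol `S` (which may only
occur positively) by one of the `n` new relation symbols of `σ.addRels n (fun _ => k)`. -/
inductive ReplEach {σ : Sig} {k n : ℕ} (S : σ.Rel k) :
    FOFml σ → FOFml (σ.addRels n fun _ => k) → Prop
  | eqC (t u : Tm σ) : ReplEach S (.eq t u) (.eq t.liftR u.liftR)
  | neqC (t u : Tm σ) : ReplEach S (.neq t u) (.neq t.liftR u.liftR)
  | relS (t : Fin k → Tm σ) (i : Fin n) :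
      ReplEach S (.rel k S t) (.rel k (Sum.inr ⟨i, rfl⟩) fun j => (t j).liftR)
  | relO {m : ℕ} (T : σ.Rel m) (t : Fin m → Tm σ)
      (h : (⟨m, T⟩ : Σ n, σ.Rel n) ≠ ⟨k, S⟩) :
      ReplEach S (.rel m T t) (.rel m (Sum.inl T) fun j => (t j).liftR)
  | nrelO {m : ℕ} (T : σ.Rel m) (t : Fin m → Tm σ)
      (h : (⟨m, T⟩ : Σ n, σ.Rel n) ≠ ⟨k, S⟩) :
      ReplEach S (.nrel m T t) (.nrel m (Sum.inl T) fun j => (t j).liftR)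
  | andC {φ φ' ψ ψ'} : ReplEach S φ φ' → ReplEach S ψ ψ' →
      ReplEach S (.and φ ψ) (.and φ' ψ')
  | orC {φ φ' ψ ψ'} : ReplEach S φ φ' → ReplEach S ψ ψ' →
      ReplEach S (.or φ ψ) (.or φ' ψ')
  | exC {v φ φ'} : ReplEach S φ φ' → ReplEach S (.ex v φ) (.ex v φ')
  | allC {v φ φ'} : ReplEach S φ φ' → ReplEach S (.all v φ) (.all v φ')

/-- Replacement of the unique (positive) occurrence `rel W t` of `W` by the formula
`v = w ∧ t = w`, for tuples `v`, `w` of new variables. -/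
inductive ReplW {σ : Sig} {ι : Type} {ar : ι → ℕ} {k : ℕ} (W : σ.Rel k) (v w : Fin k → ℕ) :
    Fml σ ι ar → Fml σ ι ar → Prop
  | atom (t : Fin k → Tm σ) :
      ReplW W v w (.rel k W t)
        (.and (bigAndL ((List.finRange k).map fun j => veq (v j) (w j)))
              (bigAndL ((List.finRange k).map fun j => Fml.eq (t j) (.var (w j)))))
  | andL {φ φ' ψ} : ReplW W v w φ φ' → ReplW W v w (.and φ ψ) (.and φ' ψ)
  | andR {φ ψ ψ'} : ReplW W v w ψ ψ' → ReplW W v w (.and φ ψ) (.and φ ψ')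
  | orL {φ φ' ψ} : ReplW W v w φ φ' → ReplW W v w (.or φ ψ) (.or φ' ψ)
  | orR {φ ψ ψ'} : ReplW W v w ψ ψ' → ReplW W v w (.or φ ψ) (.or φ ψ')

/-- The formula `D_∪(v₁ … vₙ; w₁ … wₙ)` of the paper: it asserts that the union of the
relations encoded by the pairs `(vᵢ, wᵢ)` satisfies the dependency `i₀`. -/
def depUnion {σ : Sig} {ι : Type} {ar : ι → ℕ} (i₀ : ι) (n : ℕ)
    (v w : Fin n → Fin (ar i₀) → ℕ) (p : Fin n → ℕ) (q : ℕ) (z₀ z₁ : Fin (ar i₀) → ℕ) :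
    Fml σ ι ar :=
  let k := ar i₀
  -- the guard `⋁ᵢ q = pᵢ` and its negation
  let guard : Fml σ ι ar := bigOrL ((List.finRange n).map fun i => veq q (p i))
  let nguard : Fml σ ι ar := bigAndL ((List.finRange n).map fun i => vne q (p i))
  -- the condition `⋀_{j<i} q ≠ pⱼ ∧ q = pᵢ` and its negation
  let cond : Fin n → Fml σ ι ar := fun i =>
    bigAndL ((((List.finRange n).filter fun j => j < i).map fun j => vne q (p j)) ++
      [veq q (p i)])
  let ncond : Fin n → Fml σ ι ar := fun i =>
    bigOrL ((((List.finRange n).filter fun j => j < i).map fun j => veq q (p j)) ++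
      [vne q (p i)])
  -- `z₀ z₁ = vᵢ wᵢ`
  let matchi : Fin n → Fml σ ι ar := fun i =>
    bigAndL (((List.finRange k).map fun t => veq (z₀ t) (v i t)) ++
      ((List.finRange k).map fun t => veq (z₁ t) (w i t)))
  -- `z₀ = z₁` and its negation
  let zeq : Fml σ ι ar := bigAndL ((List.finRange k).map fun t => veq (z₀ t) (z₁ t))
  let zne : Fml σ ι ar := bigOrL ((List.finRange k).map fun t => vne (z₀ t) (z₁ t))
  let body : Fml σ ι ar :=
    Fml.and
      (bigAndL ((List.finRange n).map fun i =>
        Fml.or (ncond i) (Fml.and (cond i) (matchi i))))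
      (Fml.or zne (Fml.and zeq (Fml.dep i₀ fun t => Tm.var (z₀ t))))
  alls ((List.finRange n).map p ++ [q])
    (exs ((List.finRange k).map z₀ ++ (List.finRange k).map z₁)
      (Fml.or nguard (Fml.and guard body)))

/-- The list of fresh variables used by `depUnion`. -/
def duFresh (n k : ℕ) (p : Fin n → ℕ) (q : ℕ) (z₀ z₁ : Fin k → ℕ) : List ℕ :=
  (List.finRange n).map p ++ [q] ++ (List.finRange k).map z₀ ++ (List.finRange k).map z₁

/-- The list of the variables in the tuples `v i`, `w i`. -/
def vwList (n k : ℕ) (v w : Fin n → Fin k → ℕ) : List ℕ :=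
  (List.finRange n).foldr
    (fun i acc => (List.finRange k).map (v i) ++ (List.finRange k).map (w i) ++ acc) []

/-- Apply a quantifier prefix (`true` = universal, `false` = existential) to a formula. -/
def applyPrefix {σ : Sig} {ι : Type} {ar : ι → ℕ} (pre : List (Bool × ℕ))
    (φ : Fml σ ι ar) : Fml σ ι ar :=
  pre.foldr (fun bv acc => match bv with
    | (true, x) => Fml.all x acc
    | (false, x) => Fml.ex x acc) φ

section SplitAux

variable {σ : Sig} {k n : ℕ} {M : Type}

lemma eval_liftR {a : Fin n → ℕ} (𝔐 : Struc σ M) (Q : ∀ i, Set (Fin (a i) → M))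
    (s : ℕ → M) (t : Tm σ) :
    (t.liftR : Tm (σ.addRels n a)).eval (𝔐.withRels Q) s = t.eval 𝔐 s := by
  induction t with
  | var v => rfl
  | app m f ts ih =>
      simp only [Tm.liftR, Tm.eval, Struc.withRels]
      congr 1
      funext i
      exact ih i

lemma eval_updRel (𝔐 : Struc σ M) (S : σ.Rel k) (Q : Set (Fin k → M))
    (s : ℕ → M) (t : Tm σ) :
    t.eval (𝔐.updRel S Q) s = t.eval 𝔐 s := by
  induction t with
  | var v => rfl
  | app m f ts ih =>
      simp only [Tm.eval, Struc.updRel]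
      congr 1
      funext i
      exact ih i


lemma updRel_rel_self (𝔐 : Struc σ M) (S : σ.Rel k) (Q : Set (Fin k → M))
    (xs : Fin k → M) : (𝔐.updRel S Q).rel k S xs ↔ xs ∈ Q := by
  simp only [Struc.updRel, dif_pos rfl]
  exact Iff.rfl

lemma updRel_rel_ne (𝔐 : Struc σ M) (S : σ.Rel k) (Q : Set (Fin k → M))
    {m : ℕ} (T : σ.Rel m) (hT : (⟨m, T⟩ : Σ n, σ.Rel n) ≠ ⟨k, S⟩)
    (xs : Fin m → M) : (𝔐.updRel S Q).rel m T xs ↔ 𝔐.rel m T xs := by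
  simp only [Struc.updRel, dif_neg hT]

lemma withRels_rel_inr (𝔐 : Struc σ M) (Wr : Fin n → Set (Fin k → M)) (i : Fin n)
    (xs : Fin k → M) :
    (𝔐.withRels Wr).rel k (Sum.inr ⟨i, rfl⟩) xs ↔ xs ∈ Wr i := Iff.rfl

lemma withRels_rel_inl (𝔐 : Struc σ M) {a : Fin n → ℕ} (Q : ∀ i, Set (Fin (a i) → M))
    {m : ℕ} (T : σ.Rel m) (xs : Fin m → M) :
    (𝔐.withRels Q).rel m (Sum.inl T) xs ↔ 𝔐.rel m T xs := Iff.rfl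

lemma repl_sat_of (𝔐 : Struc σ M) (S : σ.Rel k)
    (Wr : Fin n → Set (Fin k → M)) (Q : Set (Fin k → M))
    (hsub : ∀ i, Wr i ⊆ Q)
    {φ : FOFml σ} {φ' : FOFml (σ.addRels n fun _ => k)}
    (h : ReplEach S φ φ') :
    ∀ s : ℕ → M, FOSat (𝔐.withRels Wr) s φ' → FOSat (𝔐.updRel S Q) s φ := by
  induction h with
  | eqC t u =>
      intro s hs
      simpa [FOSat, eval_liftR, eval_updRel] using hs
  | neqC t u =>
      intro s hs
      simpa [FOSat, eval_liftR, eval_updRel] using hs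
  | relS t i =>
      intro s hs
      simp only [FOSat, eval_liftR, withRels_rel_inr] at hs
      simp only [FOSat, eval_updRel, updRel_rel_self]
      exact hsub i hs
  | relO T t hT =>
      intro s hs
      simp only [FOSat, eval_liftR, withRels_rel_inl] at hs
      simp only [FOSat, eval_updRel, updRel_rel_ne 𝔐 S Q T hT]
      exact hs
  | nrelO T t hT =>
      intro s hs
      simp only [FOSat, eval_liftR, withRels_rel_inl] at hs
      simp only [FOSat, eval_updRel, updRel_rel_ne 𝔐 S Q T hT]
      exact hs
  | andC h1 h2 ih1 ih2 =>
      intro s hs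
      exact ⟨ih1 s hs.1, ih2 s hs.2⟩
  | orC h1 h2 ih1 ih2 =>
      intro s hs
      exact hs.elim (fun h => Or.inl (ih1 s h)) (fun h => Or.inr (ih2 s h))
  | exC h ih =>
      intro s hs
      obtain ⟨m, hm⟩ := hs
      exact ⟨m, ih _ hm⟩
  | allC h ih =>
      intro s hs m
      exact ih _ (hs m)

lemma repl_sat_to (𝔐 : Struc σ M) (S : σ.Rel k) (Q : Set (Fin k → M))
    {φ : FOFml σ} {φ' : FOFml (σ.addRels n fun _ => k)}
    (h : ReplEach S φ φ') :
    ∀ s : ℕ → M, FOSat (𝔐.updRel S Q) s φ →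
      FOSat (𝔐.withRels fun _ : Fin n => Q) s φ' := by
  induction h with
  | eqC t u =>
      intro s hs
      simpa [FOSat, eval_liftR, eval_updRel] using hs
  | neqC t u =>
      intro s hs
      simpa [FOSat, eval_liftR, eval_updRel] using hs
  | relS t i =>
      intro s hs
      simp only [FOSat, eval_updRel, updRel_rel_self] at hs
      simp only [FOSat, eval_liftR, withRels_rel_inr]
      exact hs
  | relO T t hT =>
      intro s hs
      simp only [FOSat, eval_updRel, updRel_rel_ne 𝔐 S Q T hT] at hs
      simp only [FOSat, eval_liftR, withRels_rel_inl]
      exact hs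
  | nrelO T t hT =>
      intro s hs
      simp only [FOSat, eval_updRel, updRel_rel_ne 𝔐 S Q T hT] at hs
      simp only [FOSat, eval_liftR, withRels_rel_inl]
      exact hs
  | andC h1 h2 ih1 ih2 =>
      intro s hs
      exact ⟨ih1 s hs.1, ih2 s hs.2⟩
  | orC h1 h2 ih1 ih2 =>
      intro s hs
      exact hs.elim (fun h => Or.inl (ih1 s h)) (fun h => Or.inr (ih2 s h))
  | exC h ih =>
      intro s hs
      obtain ⟨m, hm⟩ := hs
      exact ⟨m, ih _ hm⟩
  | allC h ih =>
      intro s hs m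
      exact ih _ (hs m)

end SplitAux

/-- Splitting the positive occurrences of `S` among distinct new
symbols `W₁ … Wₙ`: there is a relation `S` with `⟨M, S⟩ ∈ D` satisfying `χ(S)` iff
there are relations `W₁ … Wₙ` with `⟨M, ⋃ᵢ Wᵢ⟩ ∈ D` satisfying `χ'(W₁ … Wₙ)`. -/
theorem split_positive_occurrences (k : ℕ) (D : DepOn k)
    (hiso : D.IsoClosed) (hdown : D.DownClosed)
    (σ : Sig) (S : σ.Rel k) (n : ℕ)
    (χ : FOFml σ) (χ' : FOFml (σ.addRels n fun _ => k))
    (hpos : (⟨k, S⟩ : Σ m, σ.Rel m) ∉ χ.negRels)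
    (hrepl : ReplEach S χ χ')
    (honce : ∀ i : Fin n,
      Fml.countRel (⟨k, Sum.inr ⟨i, rfl⟩⟩ :
        Σ m, (σ.addRels n fun _ => k).Rel m) χ' = 1)
    (M : Type) (𝔐 : Struc σ M) (s : ℕ → M) :
    (∃ Q : Set (Fin k → M), D M Q ∧ FOSat (𝔐.updRel S Q) s χ) ↔
    (∃ Wr : Fin n → Set (Fin k → M), D M (⋃ i, Wr i) ∧
      FOSat (𝔐.withRels Wr) s χ') := by
  constructor
  · rintro ⟨Q, hQ, hsat⟩
    refine ⟨fun _ => Q, hdown M Q _ hQ (Set.iUnion_subset fun _ => le_refl Q),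
      repl_sat_to 𝔐 S Q hrepl s hsat⟩
  · rintro ⟨Wr, hW, hsat⟩
    exact ⟨⋃ i, Wr i, hW,
      repl_sat_of 𝔐 S Wr _ (fun i => Set.subset_iUnion Wr i) hrepl s hsat⟩
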